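/- Define B_n^{(-k)} := ∑_{m=0}^{min(n,k)} m! · S(n+1, m+1) · m! · S(k+1, m+1) for n, k ≥ 0. Then for all n ≥ 0 and k ≥ 0, B_n^{(-(k+1))} = B_n^{(-k)} + ∑_{m=1}^{n} C(n, m) · B_{n−m+1}^{(-k)}, where C(n, m) is the binomial coefficient. -/
import Mathlib


open Finset

/-- The Stirling numbers of the second kind. -/
def stirling : ℕ → ℕ → ℕ
  | 0, 0 => 1
  | 0, _ + 1 => 0
  | _ + 1, 0 => 0
  | n + 1, k + 1 => stirling n k + (k + 1) * stirling n (k + 1)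

lemma stirling_succ (n k : ℕ) :
    stirling (n+1) (k+1) = stirling n k + (k+1) * stirling n (k+1) := rfl

lemma stirling_zero_right (n : ℕ) : stirling (n+1) 0 = 0 := rfl

lemma stirling_eq_zero : ∀ {n k : ℕ}, n < k → stirling n k = 0
  | 0, _+1, _ => rfl
  | n+1, k+1, h => by
    rw [stirling_succ, stirling_eq_zero (show n < k by omega),
      stirling_eq_zero (show n < k+1 by omega)]
    simp

lemma key (n : ℕ) : ∀ r, ∑ i ∈ range (n+1), n.choose i * stirling i r = stirling (n+1) (r+1) := by
  induction n with
  | zero => intro r; cases r <;> simp [stirling]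
  | succ n ih =>
    intro r
    have h3 : ∑ i ∈ range (n+2), n.choose i * stirling i r = stirling (n+1) (r+1) := by
      rw [Finset.sum_range_succ, ih r, Nat.choose_succ_self]
      simp
    have h2 : (∑ i ∈ range (n+1), n.choose (i+1) * stirling (i+1) r) + stirling 0 r
        = stirling (n+1) (r+1) := by
      rw [← h3]
      rw [Finset.sum_range_succ' (fun i => n.choose i * stirling i r) (n+1)]
      simp
    rw [Finset.sum_range_succ']
    simp only [Nat.choose_succ_succ, Nat.choose_zero_right, one_mul, add_mul]
    rw [Finset.sum_add_distrib, add_assoc, h2]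
    cases r with
    | zero =>
      have hB : ∑ x ∈ Finset.range (n + 1), n.choose x * stirling (x + 1) 0 = 0 := by
        simp [stirling_zero_right]
      rw [hB, show stirling (n+1+1) (0+1) = stirling (n+1) 0 + 1 * stirling (n+1) 1 from rfl,
        stirling_zero_right]
      ring
    | succ s =>
      have hB : ∑ x ∈ Finset.range (n + 1), n.choose x * stirling (x + 1) (s+1)
          = stirling (n+1) (s+1) + (s+1) * stirling (n+1) (s+2) := by
        have e1 : ∑ x ∈ Finset.range (n + 1), n.choose x * stirling (x + 1) (s+1)
            = ∑ x ∈ Finset.range (n + 1),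
                (n.choose x * stirling x s + (s+1) * (n.choose x * stirling x (s+1))) := by
          apply Finset.sum_congr rfl; intros x _; rw [stirling_succ]; ring
        rw [e1, Finset.sum_add_distrib, ih s, ← Finset.mul_sum, ih (s+1)]
      rw [hB, stirling_succ (n+1) (s+1), stirling_succ n (s+1)]
      ring

lemma key2 (n r : ℕ) : ∑ i ∈ range (n+1), n.choose i * stirling (i+1) (r+1)
    = stirling (n+1) (r+1) + (r+1) * stirling (n+1) (r+2) := by
  have e1 : ∑ i ∈ range (n+1), n.choose i * stirling (i+1) (r+1)
      = ∑ i ∈ range (n+1),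
          (n.choose i * stirling i r + (r+1) * (n.choose i * stirling i (r+1))) := by
    apply Finset.sum_congr rfl; intros x _; rw [stirling_succ]; ring
  rw [e1, Finset.sum_add_distrib, key n r, ← Finset.mul_sum, key n (r+1)]

lemma key3 (n m : ℕ) : ∑ i ∈ range (n+1), n.choose i * stirling (i+2) (m+1)
    = stirling (n+1) m + (2*m+1) * stirling (n+1) (m+1) + (m+1)^2 * stirling (n+1) (m+2) := by
  have e1 : ∑ i ∈ range (n+1), n.choose i * stirling (i+2) (m+1)
      = ∑ i ∈ range (n+1),
          (n.choose i * stirling (i+1) m + (m+1) * (n.choose i * stirling (i+1) (m+1))) := by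
    apply Finset.sum_congr rfl; intros x _; rw [stirling_succ]; ring
  rw [e1, Finset.sum_add_distrib, ← Finset.mul_sum, key2 n m]
  cases m with
  | zero =>
    have hB : ∑ x ∈ Finset.range (n + 1), n.choose x * stirling (x + 1) 0 = 0 := by
      simp [stirling_zero_right]
    rw [hB, stirling_zero_right]
    ring
  | succ s =>
    rw [key2 n s]
    ring

lemma inner_eq (n m : ℕ) : ∑ i ∈ range n, n.choose i * stirling (i+2) (m+1)
    = m * stirling (n+1) (m+1) + (m+1)^2 * stirling (n+1) (m+2) := by
  have h := key3 n m
  rw [Finset.sum_range_succ, Nat.choose_self, one_mul,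
    show stirling (n+2) (m+1) = stirling (n+1) m + (m+1) * stirling (n+1) (m+1) from rfl] at h
  have h2 : (∑ i ∈ range n, n.choose i * stirling (i+2) (m+1))
        + (stirling (n+1) m + (m+1) * stirling (n+1) (m+1))
      = (m * stirling (n+1) (m+1) + (m+1)^2 * stirling (n+1) (m+2))
        + (stirling (n+1) m + (m+1) * stirling (n+1) (m+1)) := by
    rw [h]; ring
  exact Nat.add_right_cancel h2

lemma inner_reindex (n m : ℕ) :
    ∑ i ∈ Finset.Icc 1 n, n.choose i * stirling (n - i + 2) (m+1)
      = ∑ i ∈ range n, n.choose i * stirling (i+2) (m+1) := by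
  rw [← Finset.Ico_add_one_right_eq_Icc, Finset.sum_Ico_eq_sum_range]
  simp only [show n + 1 - 1 = n from rfl]
  rw [← Finset.sum_range_reflect]
  apply Finset.sum_congr rfl
  intro i hi
  rw [Finset.mem_range] at hi
  have h1 : 1 + (n - 1 - i) = n - i := by omega
  have h2 : n - (n - i) + 2 = i + 2 := by omega
  rw [h1, h2, Nat.choose_symm (by omega)]

/-- The poly-Bernoulli number with negative upper index,
`B_n^{(-k)} = ∑_{m=0}^{min(n,k)} m! S(n+1,m+1) m! S(k+1,m+1)`. -/
def polyBernoulli (n k : ℕ) : ℕ :=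
  ∑ m ∈ Finset.range (min n k + 1),
    m.factorial * stirling (n + 1) (m + 1) * m.factorial * stirling (k + 1) (m + 1)

lemma pB_ext (n k N : ℕ) (h : min n k ≤ N) : polyBernoulli n k
    = ∑ m ∈ Finset.range (N + 1),
        m.factorial * stirling (n + 1) (m + 1) * m.factorial * stirling (k + 1) (m + 1) := by
  apply Finset.sum_subset
  · intro x hx
    rw [Finset.mem_range] at *
    omega
  · intro x _ hx
    rw [Finset.mem_range] at hx
    push_neg at hx
    rcases le_or_gt x n with h1 | h1
    · rw [stirling_eq_zero (show k + 1 < x + 1 by omega)]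
      ring
    · rw [stirling_eq_zero (show n + 1 < x + 1 by omega)]
      ring

/-- The recurrence `B_n^{(-(k+1))} = B_n^{(-k)} + ∑_{m=1}^n C(n,m) B_{n-(m-1)}^{(-k)}`. -/
theorem polyBernoulli_rec (n k : ℕ) :
    polyBernoulli n (k + 1)
      = polyBernoulli n k
        + ∑ m ∈ Finset.Icc 1 n, n.choose m * polyBernoulli (n - m + 1) k := by
  rw [pB_ext n (k+1) (n+1) (by omega), pB_ext n k n (by omega)]
  have hR2 : ∑ i ∈ Finset.Icc 1 n, n.choose i * polyBernoulli (n - i + 1) k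
      = ∑ m ∈ range (n+1), m.factorial * m.factorial * stirling (k+1) (m+1) *
          (m * stirling (n+1) (m+1) + (m+1)^2 * stirling (n+1) (m+2)) := by
    have step1 : ∀ i ∈ Finset.Icc 1 n, n.choose i * polyBernoulli (n - i + 1) k
        = ∑ m ∈ range (n+1), n.choose i *
            (m.factorial * stirling (n - i + 1 + 1) (m+1) * m.factorial
              * stirling (k+1) (m+1)) := by
      intro i hi
      rw [Finset.mem_Icc] at hi
      rw [pB_ext (n - i + 1) k n (by omega), Finset.mul_sum]
    rw [Finset.sum_congr rfl step1, Finset.sum_comm]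
    apply Finset.sum_congr rfl
    intro m _
    have e2 : ∑ i ∈ Finset.Icc 1 n, n.choose i *
          (m.factorial * stirling (n - i + 1 + 1) (m+1) * m.factorial * stirling (k+1) (m+1))
        = m.factorial * m.factorial * stirling (k+1) (m+1) *
            ∑ i ∈ Finset.Icc 1 n, n.choose i * stirling (n - i + 2) (m+1) := by
      rw [Finset.mul_sum]
      apply Finset.sum_congr rfl
      intro i _
      ring
    rw [e2, inner_reindex, inner_eq]
  rw [hR2, ← Finset.sum_add_distrib]
  have hL1 : ∑ m ∈ range (n + 1 + 1),
        m.factorial * stirling (n + 1) (m + 1) * m.factorial * stirling (k + 1 + 1) (m + 1)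
      = ∑ m ∈ range (n + 2),
          (m.factorial * stirling (n + 1) (m + 1) * m.factorial * stirling (k + 1) m
            + (m+1) * (m.factorial * stirling (n + 1) (m + 1) * m.factorial
                * stirling (k + 1) (m+1))) := by
    apply Finset.sum_congr rfl
    intro m _
    rw [stirling_succ (k+1) m]
    ring
  rw [hL1, Finset.sum_add_distrib]
  have hS1 : ∑ m ∈ range (n + 2),
        m.factorial * stirling (n + 1) (m + 1) * m.factorial * stirling (k + 1) m
      = ∑ m ∈ range (n + 1),
          (m+1).factorial * stirling (n + 1) (m + 2) * (m+1).factorial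
            * stirling (k + 1) (m+1) := by
    rw [Finset.sum_range_succ' (fun m => m.factorial * stirling (n + 1) (m + 1) * m.factorial
      * stirling (k + 1) m) (n+1)]
    simp [stirling_zero_right]
  have hS2 : ∑ m ∈ range (n + 2),
        (m+1) * (m.factorial * stirling (n + 1) (m + 1) * m.factorial * stirling (k + 1) (m+1))
      = ∑ m ∈ range (n + 1),
          (m+1) * (m.factorial * stirling (n + 1) (m + 1) * m.factorial
            * stirling (k + 1) (m+1)) := by
    rw [Finset.sum_range_succ, stirling_eq_zero (show n + 1 < n + 1 + 1 by omega)]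
    ring
  rw [hS1, hS2, ← Finset.sum_add_distrib]
  apply Finset.sum_congr rfl
  intro m _
  rw [Nat.factorial_succ]
  ring
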